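/- Let T(n,m) denote the sum, over all 2^n binary strings s of length n, of the number of distinct length-m subsequences of s. Then for 1 ≤ m ≤ n−1, T(n,m) = 2·T(n−1,m−1) + T(n−1,m). -/

import Mathlib

/-- Number of distinct subsequences of `s` of length `m`. -/
def countM (s : List Bool) (m : ℕ) : ℕ :=
  ((s.sublists.filter (fun t => t.length == m)).dedup).length

/-- Sum over all binary strings of length `n` of the number of distinct
length-`m` subsequences. -/
def T (n m : ℕ) : ℕ := ∑ f : Fin n → Bool, countM (List.ofFn f) m

/-- The finset of length-`m` sublists of `s`. -/
def D (s : List Bool) (m : ℕ) : Finset (List Bool) :=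
  (s.sublists.filter (fun t => t.length == m)).toFinset

lemma mem_D {s t : List Bool} {m : ℕ} : t ∈ D s m ↔ t.Sublist s ∧ t.length = m := by
  simp [D, List.mem_filter]

lemma countM_eq (s : List Bool) (m : ℕ) : countM s m = (D s m).card := by
  rw [D, List.card_toFinset, countM]

lemma D_cons (a : Bool) (s : List Bool) (j : ℕ) :
    D (a :: s) (j + 1) = D s (j + 1) ∪ (D s j).image (a :: ·) := by
  ext t
  simp only [mem_D, Finset.mem_union, Finset.mem_image, List.sublist_cons_iff]
  constructor
  · rintro ⟨h1 | ⟨r, rfl, hr⟩, h2⟩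
    · exact Or.inl ⟨h1, h2⟩
    · exact Or.inr ⟨r, ⟨hr, by simpa using h2⟩, rfl⟩
  · rintro (⟨h1, h2⟩ | ⟨r, ⟨hr, hl⟩, rfl⟩)
    · exact ⟨Or.inl h1, h2⟩
    · exact ⟨Or.inr ⟨r, rfl, hr⟩, by simp [hl]⟩

lemma inter_eq (a : Bool) (s : List Bool) (j : ℕ) :
    D s (j + 1) ∩ (D s j).image (a :: ·) = (D s (j + 1)).filter (fun t => t.head? = some a) := by
  ext t
  simp only [Finset.mem_inter, Finset.mem_image, Finset.mem_filter, mem_D]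
  constructor
  · rintro ⟨h, r, hr, rfl⟩
    exact ⟨h, rfl⟩
  · rintro ⟨⟨h1, h2⟩, hh⟩
    refine ⟨⟨h1, h2⟩, ?_⟩
    cases t with
    | nil => simp at h2
    | cons b r =>
      simp only [List.head?_cons, Option.some_inj] at hh
      exact ⟨r, ⟨(List.sublist_cons_self b r).trans h1, by simpa using h2⟩, by rw [hh]⟩

lemma card_cons (a : Bool) (s : List Bool) (j : ℕ) :
    (D (a :: s) (j + 1)).card + ((D s (j + 1)).filter (fun t => t.head? = some a)).card
      = (D s (j + 1)).card + (D s j).card := by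
  rw [D_cons, ← inter_eq, Finset.card_union_add_card_inter,
    Finset.card_image_of_injective _ (fun x y h => by simpa using h)]

lemma filter_sum (s : List Bool) (j : ℕ) :
    ∑ a : Bool, ((D s (j + 1)).filter (fun t => t.head? = some a)).card
      = (D s (j + 1)).card := by
  rw [Fintype.sum_bool]
  conv_rhs => rw [← Finset.card_filter_add_card_filter_not
    (p := fun t => t.head? = some true) (s := D s (j + 1))]
  have he : Finset.filter (fun t => ¬t.head? = some true) (D s (j + 1))
      = Finset.filter (fun t => t.head? = some false) (D s (j + 1)) := by
    apply Finset.filter_congr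
    intro t ht
    rw [mem_D] at ht
    cases t with
    | nil => exact absurd ht.2 (by simp)
    | cons b r => cases b <;> simp
  rw [← he]

lemma T_succ (k m : ℕ) :
    T (k + 1) m = ∑ a : Bool, ∑ f : Fin k → Bool, (D (a :: List.ofFn f) m).card := by
  rw [T, ← (Fin.consEquiv (fun _ : Fin (k + 1) => Bool)).sum_comp (fun f => countM (List.ofFn f) m)]
  rw [Fintype.sum_prod_type]
  refine Finset.sum_congr rfl fun a _ => Finset.sum_congr rfl fun f _ => ?_
  rw [countM_eq]
  congr 1
  simp [Fin.consEquiv, List.ofFn_succ]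

theorem stmt_2 (n m : ℕ) (hm : 1 ≤ m) (hmn : m ≤ n - 1) (hn : 1 ≤ n) :
    T n m = 2 * T (n - 1) (m - 1) + T (n - 1) m := by
  obtain ⟨k, rfl⟩ : ∃ k, n = k + 1 := ⟨n - 1, by omega⟩
  obtain ⟨j, rfl⟩ : ∃ j, m = j + 1 := ⟨m - 1, by omega⟩
  simp only [Nat.add_sub_cancel]
  have key : T (k + 1) (j + 1) + T k (j + 1) = 2 * (T k (j + 1) + T k j) := by
    have h1 : T k (j + 1) = ∑ f : Fin k → Bool,
        ∑ a : Bool, ((D (List.ofFn f) (j + 1)).filter (fun t => t.head? = some a)).card := by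
      rw [T]
      exact Finset.sum_congr rfl fun f _ => by rw [countM_eq, filter_sum]
    calc T (k + 1) (j + 1) + T k (j + 1)
        = ∑ a : Bool, ∑ f : Fin k → Bool, ((D (a :: List.ofFn f) (j + 1)).card
            + ((D (List.ofFn f) (j + 1)).filter (fun t => t.head? = some a)).card) := by
          rw [T_succ, h1, Finset.sum_comm (s := Finset.univ) (t := Finset.univ)
            (f := fun f a => ((D (List.ofFn f) (j + 1)).filter (fun t => t.head? = some a)).card),
            ← Finset.sum_add_distrib]
          exact Finset.sum_congr rfl fun a _ => (Finset.sum_add_distrib).symm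
      _ = ∑ a : Bool, ∑ f : Fin k → Bool,
            ((D (List.ofFn f) (j + 1)).card + (D (List.ofFn f) j).card) := by
          exact Finset.sum_congr rfl fun a _ => Finset.sum_congr rfl fun f _ => card_cons a _ j
      _ = 2 * (T k (j + 1) + T k j) := by
          rw [Fintype.sum_bool, T, T]
          simp only [countM_eq]
          rw [Finset.sum_add_distrib]
          ring
  omega
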